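/- Let ω_r^d = R_r·ω_d − ω_c − R_r·R_dᵀ·e_R^{dc} where e_R^{dc} = skew(K_R^{dc}·R_e^{dc})^∨ and R_e^{dc} = R_{dc}·R_dᵀ with R_{dc} = R_c·R_r. Then along the kinematics ω_{dc} = R_rᵀ(ω_c + ω_r^d), the Lyapunov function Ψ_{dc} = (1/2)tr(K_R^{dc}(I − R_e^{dc})) satisfies Ψ̇_{dc} = (R_dᵀe_R^{dc})ᵀ(ω_{dc} − ω_d) = −‖e_R^{dc}‖² ≤ 0. -/

import Mathlib

open Matrix

noncomputable section

/-- The special orthogonal group SO(3) as a set of real 3×3 matrices. -/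
def SO3 : Set (Matrix (Fin 3) (Fin 3) ℝ) := {R | Rᵀ * R = 1 ∧ R.det = 1}

/-- The hat map: hat(x)·y = x × y. -/
def hat (x : Fin 3 → ℝ) : Matrix (Fin 3) (Fin 3) ℝ :=
  !![0, -x 2, x 1; x 2, 0, -x 0; -x 1, x 0, 0]

/-- The vee map, inverse of hat on skew-symmetric matrices. -/
def vee (A : Matrix (Fin 3) (Fin 3) ℝ) : Fin 3 → ℝ := ![A 2 1, A 0 2, A 1 0]

/-- Skew-symmetric part of a matrix. -/
def skew (A : Matrix (Fin 3) (Fin 3) ℝ) : Matrix (Fin 3) (Fin 3) ℝ := (1/2 : ℝ) • (A - Aᵀ)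

/-- Euclidean norm on ℝ³. -/
def norm3 (x : Fin 3 → ℝ) : ℝ := Real.sqrt (∑ i, x i ^ 2)

/-- Error navigation function Ψ(R) = ½ tr(K (I − R)). -/
def Psi (K R : Matrix (Fin 3) (Fin 3) ℝ) : ℝ := (1/2) * (K * (1 - R)).trace

lemma hat_sub (v w : Fin 3 → ℝ) : hat (v - w) = hat v - hat w := by
  ext i j; fin_cases i <;> fin_cases j <;> simp [hat] <;> ring

lemma hat_transpose (v : Fin 3 → ℝ) : (hat v)ᵀ = -hat v := by
  ext i j; fin_cases i <;> fin_cases j <;> simp [hat]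

lemma tr_mul_hat (M : Matrix (Fin 3) (Fin 3) ℝ) (v : Fin 3 → ℝ) :
    (M * hat v).trace = -2 * (vee (skew M) ⬝ᵥ v) := by
  simp [Matrix.trace, Matrix.mul_apply, Fin.sum_univ_three, hat, vee, skew,
    dotProduct]
  ring

lemma hat_mulVec (R : Matrix (Fin 3) (Fin 3) ℝ) (h1 : Rᵀ * R = 1) (h2 : R.det = 1)
    (v : Fin 3 → ℝ) : hat (R.mulVec v) = R * hat v * Rᵀ := by
  have hRR : R * Rᵀ = 1 := mul_eq_one_comm.mp h1
  have hadj : R.adjugate = Rᵀ := by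
    have h3 : R * R.adjugate = 1 := by rw [Matrix.mul_adjugate, h2, one_smul]
    have h4 := Matrix.inv_eq_right_inv h3
    rw [Matrix.inv_eq_right_inv hRR] at h4
    exact h4.symm
  rw [Matrix.adjugate_fin_three] at hadj
  have hc : ∀ i j : Fin 3, (!![R 1 1 * R 2 2 - R 1 2 * R 2 1,
      -(R 0 1 * R 2 2) + R 0 2 * R 2 1,
      R 0 1 * R 1 2 - R 0 2 * R 1 1;
      -(R 1 0 * R 2 2) + R 1 2 * R 2 0,
      R 0 0 * R 2 2 - R 0 2 * R 2 0,
      -(R 0 0 * R 1 2) + R 0 2 * R 1 0;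
      R 1 0 * R 2 1 - R 1 1 * R 2 0,
      -(R 0 0 * R 2 1) + R 0 1 * R 2 0,
      R 0 0 * R 1 1 - R 0 1 * R 1 0] : Matrix (Fin 3) (Fin 3) ℝ) i j = Rᵀ i j := by
    intro i j; rw [hadj]
  have h00 := hc 0 0; have h01 := hc 0 1; have h02 := hc 0 2
  have h10 := hc 1 0; have h11 := hc 1 1; have h12 := hc 1 2
  have h20 := hc 2 0; have h21 := hc 2 1; have h22 := hc 2 2
  simp [Matrix.transpose_apply] at h00 h01 h02 h10 h11 h12 h20 h21 h22
  have e00 : hat (R.mulVec v) 0 0 = (R * hat v * Rᵀ) 0 0 := by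
    simp [hat, Matrix.mulVec, Matrix.mul_apply, dotProduct, Fin.sum_univ_three,
      Matrix.transpose_apply]
    ring
  have e01 : hat (R.mulVec v) 0 1 = (R * hat v * Rᵀ) 0 1 := by
    simp [hat, Matrix.mulVec, Matrix.mul_apply, dotProduct, Fin.sum_univ_three,
      Matrix.transpose_apply]
    first
    | linear_combination v 0 * h02 + v 1 * h12 + v 2 * h22
    | linear_combination (-(v 0 * h02 + v 1 * h12 + v 2 * h22))
  have e02 : hat (R.mulVec v) 0 2 = (R * hat v * Rᵀ) 0 2 := by
    simp [hat, Matrix.mulVec, Matrix.mul_apply, dotProduct, Fin.sum_univ_three,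
      Matrix.transpose_apply]
    first
    | linear_combination -(v 0 * h01 + v 1 * h11 + v 2 * h21)
    | linear_combination (-(-(v 0 * h01 + v 1 * h11 + v 2 * h21)))
  have e10 : hat (R.mulVec v) 1 0 = (R * hat v * Rᵀ) 1 0 := by
    simp [hat, Matrix.mulVec, Matrix.mul_apply, dotProduct, Fin.sum_univ_three,
      Matrix.transpose_apply]
    first
    | linear_combination -(v 0 * h02 + v 1 * h12 + v 2 * h22)
    | linear_combination (-(-(v 0 * h02 + v 1 * h12 + v 2 * h22)))
  have e11 : hat (R.mulVec v) 1 1 = (R * hat v * Rᵀ) 1 1 := by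
    simp [hat, Matrix.mulVec, Matrix.mul_apply, dotProduct, Fin.sum_univ_three,
      Matrix.transpose_apply]
    ring
  have e12 : hat (R.mulVec v) 1 2 = (R * hat v * Rᵀ) 1 2 := by
    simp [hat, Matrix.mulVec, Matrix.mul_apply, dotProduct, Fin.sum_univ_three,
      Matrix.transpose_apply]
    first
    | linear_combination v 0 * h00 + v 1 * h10 + v 2 * h20
    | linear_combination (-(v 0 * h00 + v 1 * h10 + v 2 * h20))
  have e20 : hat (R.mulVec v) 2 0 = (R * hat v * Rᵀ) 2 0 := by
    simp [hat, Matrix.mulVec, Matrix.mul_apply, dotProduct, Fin.sum_univ_three,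
      Matrix.transpose_apply]
    first
    | linear_combination v 0 * h01 + v 1 * h11 + v 2 * h21
    | linear_combination (-(v 0 * h01 + v 1 * h11 + v 2 * h21))
  have e21 : hat (R.mulVec v) 2 1 = (R * hat v * Rᵀ) 2 1 := by
    simp [hat, Matrix.mulVec, Matrix.mul_apply, dotProduct, Fin.sum_univ_three,
      Matrix.transpose_apply]
    first
    | linear_combination -(v 0 * h00 + v 1 * h10 + v 2 * h20)
    | linear_combination (-(-(v 0 * h00 + v 1 * h10 + v 2 * h20)))
  have e22 : hat (R.mulVec v) 2 2 = (R * hat v * Rᵀ) 2 2 := by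
    simp [hat, Matrix.mulVec, Matrix.mul_apply, dotProduct, Fin.sum_univ_three,
      Matrix.transpose_apply]
    ring
  rw [Matrix.eta_fin_three (hat (R.mulVec v)), Matrix.eta_fin_three (R * hat v * Rᵀ),
    e00, e01, e02, e10, e11, e12, e20, e21, e22]


lemma omega_simp (Rr Rdt : Matrix (Fin 3) (Fin 3) ℝ) (hRr : Rrᵀ * Rr = 1)
    (a b c : Fin 3 → ℝ) :
    Rrᵀ.mulVec (a + (Rr.mulVec b - a - (Rr * Rdtᵀ).mulVec c)) = b - Rdtᵀ.mulVec c := by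
  have h : a + (Rr.mulVec b - a - (Rr * Rdtᵀ).mulVec c)
      = Rr.mulVec b - (Rr * Rdtᵀ).mulVec c := by abel
  rw [h, Matrix.mulVec_sub, Matrix.mulVec_mulVec, Matrix.mulVec_mulVec,
    ← Matrix.mul_assoc, hRr, Matrix.one_mul, Matrix.one_mulVec]

lemma dot_ortho (R : Matrix (Fin 3) (Fin 3) ℝ) (hR : Rᵀ * R = 1) (v : Fin 3 → ℝ) :
    Rᵀ.mulVec v ⬝ᵥ Rᵀ.mulVec v = v ⬝ᵥ v := by
  have hRR : R * Rᵀ = 1 := mul_eq_one_comm.mp hR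
  nth_rewrite 1 [Matrix.mulVec_transpose]
  rw [← Matrix.dotProduct_mulVec, Matrix.mulVec_mulVec, hRR, Matrix.one_mulVec]

lemma deriv_Psi (K : Matrix (Fin 3) (Fin 3) ℝ) (A B : ℝ → Matrix (Fin 3) (Fin 3) ℝ)
    (A' B' : Matrix (Fin 3) (Fin 3) ℝ) (t : ℝ)
    (hA : ∀ i j, HasDerivAt (fun s => A s i j) (A' i j) t)
    (hB : ∀ i j, HasDerivAt (fun s => B s i j) (B' i j) t) :
    HasDerivAt (fun s => Psi K (A s * (B s)ᵀ))
      (-(1/2) * ((K * A' * (B t)ᵀ).trace + (K * A t * B'ᵀ).trace)) t := by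
  have h3 : HasDerivAt (fun s => ∑ i, ∑ j, (∑ l, K i l * A s l j) * B s i j)
      (∑ i, ∑ j, ((∑ l, K i l * A' l j) * B t i j + (∑ l, K i l * A t l j) * B' i j)) t := by
    refine HasDerivAt.fun_sum fun i _ => HasDerivAt.fun_sum fun j _ => ?_
    exact (HasDerivAt.fun_sum fun l _ => (hA l j).const_mul (K i l)).mul (hB i j)
  have h4 := (h3.const_sub K.trace).const_mul (1/2 : ℝ)
  have hfun : (fun s => Psi K (A s * (B s)ᵀ))
      = fun s => 1/2 * (K.trace - ∑ i, ∑ j, (∑ l, K i l * A s l j) * B s i j) := by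
    funext s
    simp only [Psi, Matrix.mul_sub, Matrix.mul_one, Matrix.trace_sub, Matrix.trace,
      Matrix.diag_apply, Matrix.sub_apply, Matrix.mul_apply, Matrix.transpose_apply,
      Fin.sum_univ_three]
    ring
  rw [hfun]
  refine h4.congr_deriv ?_
  simp only [Matrix.trace, Matrix.diag_apply, Matrix.mul_apply, Matrix.transpose_apply,
    Fin.sum_univ_three]
  ring

lemma value_eq (K P Rd : Matrix (Fin 3) (Fin 3) ℝ) (w E : Fin 3 → ℝ)
    (hRd1 : Rdᵀ * Rd = 1) (hRd2 : Rd.det = 1)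
    (hEv : vee (skew (K * P * Rdᵀ)) = E) :
    -(1/2) * ((K * (P * hat (w - Rdᵀ.mulVec E)) * Rdᵀ).trace
        + (K * P * (Rd * hat w)ᵀ).trace)
      = Rdᵀ.mulVec E ⬝ᵥ (w - Rdᵀ.mulVec E - w) := by
  have hRR : Rd * Rdᵀ = 1 := mul_eq_one_comm.mp hRd1
  have hhat : hat (Rdᵀ.mulVec E) = Rdᵀ * hat E * Rd := by
    have h := hat_mulVec Rdᵀ (by rw [transpose_transpose]; exact hRR)
      (by rw [Matrix.det_transpose]; exact hRd2) E
    rwa [transpose_transpose] at h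
  have h1 : K * (P * hat (w - Rdᵀ.mulVec E)) * Rdᵀ
      = K * (P * hat w) * Rdᵀ - K * P * Rdᵀ * hat E := by
    rw [hat_sub, hhat]
    have h2 : K * (P * (hat w - Rdᵀ * hat E * Rd)) * Rdᵀ
        = K * (P * hat w) * Rdᵀ - K * P * Rdᵀ * hat E * (Rd * Rdᵀ) := by noncomm_ring
    rw [h2, hRR, mul_one]
  have h2 : K * P * (Rd * hat w)ᵀ = -(K * (P * hat w) * Rdᵀ) := by
    rw [Matrix.transpose_mul, hat_transpose]; noncomm_ring
  rw [h1, h2, Matrix.trace_sub, Matrix.trace_neg, tr_mul_hat, hEv]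
  have h3 : w - Rdᵀ.mulVec E - w = -(Rdᵀ.mulVec E) := by abel
  rw [h3, dotProduct_neg, dot_ortho Rd hRd1 E]
  ring

/-- With ω_r^d = R_r ω_d − ω_c − R_r R_dᵀ e_R^{dc} and ω_{dc} = R_rᵀ(ω_c + ω_r^d), the
Lyapunov function Ψ_{dc} satisfies Ψ̇_{dc} = (R_dᵀe_R^{dc})ᵀ(ω_{dc} − ω_d) = −‖e_R^{dc}‖² ≤ 0. -/
theorem stmt_14 (k₁ k₂ k₃ : ℝ) (hk₁ : 0 < k₁) (hk₂ : 0 < k₂) (hk₃ : 0 < k₃)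
    (Rc Rr Rd : ℝ → Matrix (Fin 3) (Fin 3) ℝ) (ωc ωd : ℝ → Fin 3 → ℝ) (t : ℝ)
    (hRc : ∀ s, Rc s ∈ SO3) (hRr : ∀ s, Rr s ∈ SO3) (hRd : ∀ s, Rd s ∈ SO3)
    (hdRdc : ∀ s (i j : Fin 3),
      HasDerivAt (fun u => (Rc u * Rr u) i j)
        ((Rc s * Rr s *
          hat ((Rr s)ᵀ.mulVec (ωc s +
            ((Rr s).mulVec (ωd s) - ωc s -
              (Rr s * (Rd s)ᵀ).mulVec
                (vee (skew (Matrix.diagonal ![k₁, k₂, k₃] *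
                  (Rc s * Rr s * (Rd s)ᵀ)))))))) i j) s)
    (hdRd : ∀ s (i j : Fin 3), HasDerivAt (fun u => Rd u i j) ((Rd s * hat (ωd s)) i j) s) :
    HasDerivAt
        (fun s => Psi (Matrix.diagonal ![k₁, k₂, k₃]) (Rc s * Rr s * (Rd s)ᵀ))
        (((Rd t)ᵀ.mulVec
            (vee (skew (Matrix.diagonal ![k₁, k₂, k₃] * (Rc t * Rr t * (Rd t)ᵀ)))) ⬝ᵥ
          ((Rr t)ᵀ.mulVec (ωc t +
            ((Rr t).mulVec (ωd t) - ωc t -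
              (Rr t * (Rd t)ᵀ).mulVec
                (vee (skew (Matrix.diagonal ![k₁, k₂, k₃] *
                  (Rc t * Rr t * (Rd t)ᵀ)))))) - ωd t))) t ∧
      ((Rd t)ᵀ.mulVec
          (vee (skew (Matrix.diagonal ![k₁, k₂, k₃] * (Rc t * Rr t * (Rd t)ᵀ)))) ⬝ᵥ
        ((Rr t)ᵀ.mulVec (ωc t +
          ((Rr t).mulVec (ωd t) - ωc t -
            (Rr t * (Rd t)ᵀ).mulVec
              (vee (skew (Matrix.diagonal ![k₁, k₂, k₃] *
                (Rc t * Rr t * (Rd t)ᵀ)))))) - ωd t)) =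
        -(norm3 (vee (skew (Matrix.diagonal ![k₁, k₂, k₃] * (Rc t * Rr t * (Rd t)ᵀ)))) ^ 2) ∧
      -(norm3 (vee (skew (Matrix.diagonal ![k₁, k₂, k₃] * (Rc t * Rr t * (Rd t)ᵀ)))) ^ 2) ≤ 0 := by
  have hRdo := (hRd t).1
  have hRdd := (hRd t).2
  have hRro := (hRr t).1
  have ho := omega_simp (Rr t) (Rd t) hRro (ωc t) (ωd t)
    (vee (skew (Matrix.diagonal ![k₁, k₂, k₃] * (Rc t * Rr t * (Rd t)ᵀ))))
  rw [ho]
  refine ⟨?_, ?_, ?_⟩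
  · have hA : ∀ i j, HasDerivAt (fun u => (Rc u * Rr u) i j)
        ((Rc t * Rr t * hat (ωd t - (Rd t)ᵀ.mulVec
          (vee (skew (Matrix.diagonal ![k₁, k₂, k₃] * (Rc t * Rr t * (Rd t)ᵀ)))))) i j) t := by
      intro i j
      have h := hdRdc t i j
      rwa [ho] at h
    have hd := deriv_Psi (Matrix.diagonal ![k₁, k₂, k₃]) (fun s => Rc s * Rr s) Rd
      (Rc t * Rr t * hat (ωd t - (Rd t)ᵀ.mulVec
        (vee (skew (Matrix.diagonal ![k₁, k₂, k₃] * (Rc t * Rr t * (Rd t)ᵀ))))))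
      (Rd t * hat (ωd t)) t hA (fun i j => hdRd t i j)
    have hv := value_eq (Matrix.diagonal ![k₁, k₂, k₃]) (Rc t * Rr t) (Rd t) (ωd t)
      (vee (skew (Matrix.diagonal ![k₁, k₂, k₃] * (Rc t * Rr t * (Rd t)ᵀ)))) hRdo hRdd
      (by rw [Matrix.mul_assoc])
    rw [← hv]
    exact hd
  · have h3 : ωd t - (Rd t)ᵀ.mulVec
        (vee (skew (Matrix.diagonal ![k₁, k₂, k₃] * (Rc t * Rr t * (Rd t)ᵀ)))) - ωd t
        = -((Rd t)ᵀ.mulVec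
          (vee (skew (Matrix.diagonal ![k₁, k₂, k₃] * (Rc t * Rr t * (Rd t)ᵀ))))) := by abel
    rw [h3, dotProduct_neg, dot_ortho (Rd t) hRdo]
    have h4 : norm3 (vee (skew (Matrix.diagonal ![k₁, k₂, k₃] * (Rc t * Rr t * (Rd t)ᵀ)))) ^ 2
        = vee (skew (Matrix.diagonal ![k₁, k₂, k₃] * (Rc t * Rr t * (Rd t)ᵀ)))
          ⬝ᵥ vee (skew (Matrix.diagonal ![k₁, k₂, k₃] * (Rc t * Rr t * (Rd t)ᵀ))) := by
      rw [norm3, Real.sq_sqrt (by positivity)]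
      simp [dotProduct, pow_two]
    rw [h4]
  · exact neg_nonpos.mpr (sq_nonneg _)
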